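/- Assume π̲ = 0 and let t_k, t_r > 0. For every fixed p ∈ [0, π̄] with F(p) > 0 and 2 t_r (1 − F(p)) ≤ t_k, the persistent-request cost Φ₃(p, q) is nondecreasing in q on [0, 1]: if 0 ≤ q ≤ q' ≤ 1 then Φ₃(p, q) ≤ Φ₃(p, q'). -/
import Mathlib

theorem key
    (πhi : ℝ) (f F : ℝ → ℝ)
    (hπhi : 0 < πhi)
    (hcont : ContinuousOn f (Set.Icc 0 πhi))
    (hnn : ∀ x ∈ Set.Icc 0 πhi, 0 ≤ f x)
    (hanti : ∀ x ∈ Set.Icc 0 πhi, ∀ y ∈ Set.Icc 0 πhi, x ≤ y → f y ≤ f x)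
    (hF : ∀ p, F p = ∫ x in (0:ℝ)..p, f x)
    (p : ℝ) (hp : p ∈ Set.Icc 0 πhi) :
    2 * (∫ x in (0:ℝ)..p, x * f x) ≤ p * F p := by
  obtain ⟨hp0, hpπ⟩ := hp
  have hsub : Set.Icc (0:ℝ) p ⊆ Set.Icc 0 πhi := Set.Icc_subset_Icc le_rfl hpπ
  have hcf : ContinuousOn f (Set.Icc 0 p) := hcont.mono hsub
  have hmaps : ∀ x ∈ Set.Icc (0:ℝ) p, p - x ∈ Set.Icc (0:ℝ) p := by
    intro x hx; exact ⟨by linarith [hx.2], by linarith [hx.1]⟩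
  have hcf2 : ContinuousOn (fun x => f (p - x)) (Set.Icc 0 p) :=
    hcf.comp ((continuousOn_const).sub continuousOn_id) hmaps
  have h1 : IntervalIntegrable (fun x => x * f x) MeasureTheory.volume 0 p := by
    apply ContinuousOn.intervalIntegrable
    rw [Set.uIcc_of_le hp0]
    exact continuousOn_id.mul hcf
  have h2 : IntervalIntegrable (fun x => (p - x) * f (p - x)) MeasureTheory.volume 0 p := by
    apply ContinuousOn.intervalIntegrable
    rw [Set.uIcc_of_le hp0]
    exact ((continuousOn_const).sub continuousOn_id).mul hcf2
  have h3 : IntervalIntegrable (fun x => p / 2 * (f x + f (p - x))) MeasureTheory.volume 0 p := by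
    apply ContinuousOn.intervalIntegrable
    rw [Set.uIcc_of_le hp0]
    exact continuousOn_const.mul (hcf.add hcf2)
  have hflip : (∫ x in (0:ℝ)..p, (p - x) * f (p - x)) = ∫ x in (0:ℝ)..p, x * f x := by
    have := intervalIntegral.integral_comp_sub_left (fun x => x * f x) p (a := 0) (b := p)
    simpa using this
  have hflipf : (∫ x in (0:ℝ)..p, f (p - x)) = ∫ x in (0:ℝ)..p, f x := by
    have := intervalIntegral.integral_comp_sub_left f p (a := 0) (b := p)
    simpa using this
  have hsum : (∫ x in (0:ℝ)..p, (x * f x + (p - x) * f (p - x)))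
      ≤ ∫ x in (0:ℝ)..p, p / 2 * (f x + f (p - x)) := by
    apply intervalIntegral.integral_mono_on hp0 (h1.add h2) h3
    intro x hx
    have hx1 := hx.1; have hx2 := hx.2
    have hxm : x ∈ Set.Icc 0 πhi := hsub hx
    have hpxm : p - x ∈ Set.Icc 0 πhi := hsub (hmaps x hx)
    rcases le_total x (p / 2) with h | h
    · have : f (p - x) ≤ f x := hanti x hxm (p - x) hpxm (by linarith)
      nlinarith
    · have : f x ≤ f (p - x) := hanti (p - x) hpxm x hxm (by linarith)
      nlinarith
  have hif : IntervalIntegrable f MeasureTheory.volume 0 p := by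
    apply ContinuousOn.intervalIntegrable; rw [Set.uIcc_of_le hp0]; exact hcf
  have hif2 : IntervalIntegrable (fun x => f (p - x)) MeasureTheory.volume 0 p := by
    apply ContinuousOn.intervalIntegrable; rw [Set.uIcc_of_le hp0]; exact hcf2
  have hL : (∫ x in (0:ℝ)..p, (x * f x + (p - x) * f (p - x)))
      = 2 * ∫ x in (0:ℝ)..p, x * f x := by
    rw [intervalIntegral.integral_add h1 h2, hflip]; ring
  have hR : (∫ x in (0:ℝ)..p, p / 2 * (f x + f (p - x))) = p * F p := by
    rw [intervalIntegral.integral_const_mul, intervalIntegral.integral_add hif hif2,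
      hflipf, hF p]; ring
  rw [hL, hR] at hsum
  exact hsum



/-- Expected total cost for a persistent request (with `π̲ = 0`). -/
noncomputable def Phi3 (πhi tk te tr : ℝ) (f F : ℝ → ℝ) (p q : ℝ) : ℝ :=
  q * te * πhi +
    ((1 - q) * te / (1 - (tr / tk) * (1 - F p))) * ((∫ x in (0:ℝ)..p, x * f x) / F p)

/-- For fixed `p ∈ [0, π̄]` with `F(p) > 0` and `2 t_r (1 − F(p)) ≤ t_k`, the
persistent-request cost `Φ₃(p, q)` is nondecreasing in `q` on `[0, 1]`. -/
theorem stmt_13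
    (πhi : ℝ) (f F : ℝ → ℝ)
    (hπhi : 0 < πhi)
    (hcont : ContinuousOn f (Set.Icc 0 πhi))
    (hnn : ∀ x ∈ Set.Icc 0 πhi, 0 ≤ f x)
    (hanti : ∀ x ∈ Set.Icc 0 πhi, ∀ y ∈ Set.Icc 0 πhi, x ≤ y → f y ≤ f x)
    (hone : (∫ x in (0:ℝ)..πhi, f x) = 1)
    (hF : ∀ p, F p = ∫ x in (0:ℝ)..p, f x)
    (tk te tr : ℝ) (htk : 0 < tk) (hte : 0 < te) (htr : 0 < tr)
    (p : ℝ) (hp : p ∈ Set.Icc 0 πhi) (hFp : 0 < F p)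
    (hrec : 2 * tr * (1 - F p) ≤ tk)
    (q q' : ℝ) (hq0 : 0 ≤ q) (hqq' : q ≤ q') (hq'1 : q' ≤ 1) :
    Phi3 πhi tk te tr f F p q ≤ Phi3 πhi tk te tr f F p q' := by

  have hI2 : 2 * (∫ x in (0:ℝ)..p, x * f x) ≤ p * F p :=
    key πhi f F hπhi hcont hnn hanti hF p hp
  have hI0 : 0 ≤ ∫ x in (0:ℝ)..p, x * f x := by
    apply intervalIntegral.integral_nonneg hp.1
    intro x hx
    exact mul_nonneg hx.1 (hnn x (Set.Icc_subset_Icc le_rfl hp.2 hx))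
  set I := ∫ x in (0:ℝ)..p, x * f x with hIdef
  set D := 1 - tr / tk * (1 - F p) with hDdef
  have hDhalf : (1:ℝ)/2 ≤ D := by
    have h : tr / tk * (1 - F p) ≤ 1/2 := by
      rw [div_mul_eq_mul_div, div_le_div_iff₀ htk (by norm_num)]
      linarith
    simp only [hDdef]; linarith
  have hDpos : 0 < D := lt_of_lt_of_le (by norm_num) hDhalf
  have hB : (I / F p) / D ≤ πhi := by
    have h1 : I / F p ≤ p / 2 := by
      rw [div_le_div_iff₀ hFp (by norm_num)]
      linarith
    rw [div_le_iff₀ hDpos]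
    nlinarith [hp.2, hπhi.le]
  have hBnn : 0 ≤ (I / F p) / D :=
    div_nonneg (div_nonneg hI0 hFp.le) hDpos.le
  have key2 : te / D * (I / F p) ≤ te * πhi := by
    have : te / D * (I / F p) = te * ((I / F p) / D) := by ring
    rw [this]
    exact mul_le_mul_of_nonneg_left hB hte.le
  have key3 : 0 ≤ te / D * (I / F p) :=
    mul_nonneg (div_nonneg hte.le hDpos.le) (div_nonneg hI0 hFp.le)
  unfold Phi3
  have e1 : ∀ r : ℝ, (1 - r) * te / D * (I / F p) = (1 - r) * (te / D * (I / F p)) := by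
    intro r; ring
  rw [← hIdef, ← hDdef, e1, e1]
  nlinarith [mul_nonneg (sub_nonneg.2 hqq') (sub_nonneg.2 key2)]
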